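/- For N ≥ 1 a positive integer, σ² > 0 and a > 0, the stationary point condition for ζ(λ) = 1 - γ(N, Nλ/σ²)/Γ(N) + γ(N, Nλ/(a+σ²))/Γ(N) is: ζ'(λ) = 0 if and only if λ = σ²(a+σ²)/a · ln((a+σ²)/σ²), for λ > 0. -/

import Mathlib

open Real Filter Set Topology

/-- Lower incomplete gamma function `γ(s,x) = ∫₀ˣ e^{-t} t^{s-1} dt`. -/
noncomputable def lowerGamma (s x : ℝ) : ℝ := ∫ t in (0:ℝ)..x, Real.exp (-t) * t ^ (s - 1)

lemma lowerGamma_hasDerivAt (N : ℕ) (hN : 1 ≤ N) (c l : ℝ) :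
    HasDerivAt (fun l : ℝ => lowerGamma N (c * l))
      (Real.exp (-(c * l)) * (c * l) ^ (N - 1) * c) l := by
  have hcast : ((N : ℝ) - 1) = ((N - 1 : ℕ) : ℝ) := by
    rw [Nat.cast_sub hN, Nat.cast_one]
  have hfun : ∀ x : ℝ, lowerGamma N x
      = ∫ t in (0:ℝ)..x, Real.exp (-t) * t ^ (N - 1 : ℕ) := by
    intro x
    unfold lowerGamma
    refine intervalIntegral.integral_congr fun t _ => ?_
    rw [hcast, Real.rpow_natCast]
  have hcont : Continuous fun t : ℝ => Real.exp (-t) * t ^ (N - 1 : ℕ) := by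
    fun_prop
  have h1 : HasDerivAt (fun x : ℝ => ∫ t in (0:ℝ)..x, Real.exp (-t) * t ^ (N - 1 : ℕ))
      (Real.exp (-(c * l)) * (c * l) ^ (N - 1 : ℕ)) (c * l) :=
    intervalIntegral.integral_hasDerivAt_right (hcont.intervalIntegrable _ _)
      (hcont.stronglyMeasurable.stronglyMeasurableAtFilter) hcont.continuousAt
  have h2 : HasDerivAt (fun l : ℝ => c * l) c l := by
    simpa using (hasDerivAt_id l).const_mul c
  have h3 := h1.comp l h2
  simp only [hfun]
  exact h3

theorem stmt_1 (N : ℕ) (hN : 1 ≤ N) (σ2 a : ℝ) (hσ : 0 < σ2) (ha : 0 < a)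
    (l : ℝ) (hl : 0 < l) :
    deriv (fun l : ℝ => 1 - lowerGamma N ((N : ℝ) * l / σ2) / Real.Gamma N
        + lowerGamma N ((N : ℝ) * l / (a + σ2)) / Real.Gamma N) l = 0
      ↔ l = σ2 * (a + σ2) / a * Real.log ((a + σ2) / σ2) := by
  have hs : (0:ℝ) < a + σ2 := by linarith
  have hNpos : (0:ℝ) < (N : ℝ) := by exact_mod_cast hN
  set c1 : ℝ := (N : ℝ) / σ2 with hc1def
  set c2 : ℝ := (N : ℝ) / (a + σ2) with hc2def
  have hc1 : 0 < c1 := div_pos hNpos hσ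
  have hc2 : 0 < c2 := div_pos hNpos hs
  set K : ℝ := Real.Gamma N with hKdef
  have hK : 0 < K := Real.Gamma_pos_of_pos hNpos
  have hrw1 : ∀ x : ℝ, (N : ℝ) * x / σ2 = c1 * x := fun x => by rw [hc1def]; ring
  have hrw2 : ∀ x : ℝ, (N : ℝ) * x / (a + σ2) = c2 * x := fun x => by rw [hc2def]; ring
  have hder : deriv (fun l : ℝ => 1 - lowerGamma N ((N : ℝ) * l / σ2) / Real.Gamma N
        + lowerGamma N ((N : ℝ) * l / (a + σ2)) / Real.Gamma N) l
      = 0 - Real.exp (-(c1 * l)) * (c1 * l) ^ (N - 1) * c1 / K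
        + Real.exp (-(c2 * l)) * (c2 * l) ^ (N - 1) * c2 / K := by
    have h := (((hasDerivAt_const l (1:ℝ)).sub
        ((lowerGamma_hasDerivAt N hN c1 l).div_const K)).add
        ((lowerGamma_hasDerivAt N hN c2 l).div_const K))
    simp only [hrw1, hrw2]
    exact h.deriv
  rw [hder]
  set m : ℕ := N - 1 with hmdef
  have hm : m + 1 = N := Nat.succ_pred_eq_of_pos hN
  set A : ℝ := Real.exp (-(c1 * l)) * c1 ^ N with hAdef
  set B : ℝ := Real.exp (-(c2 * l)) * c2 ^ N with hBdef
  have e1 : Real.exp (-(c1 * l)) * (c1 * l) ^ m * c1 = A * l ^ m := by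
    rw [hAdef, mul_pow, ← hm, pow_succ]; ring
  have e2 : Real.exp (-(c2 * l)) * (c2 * l) ^ m * c2 = B * l ^ m := by
    rw [hBdef, mul_pow, ← hm, pow_succ]; ring
  have erw : 0 - Real.exp (-(c1 * l)) * (c1 * l) ^ m * c1 / K
        + Real.exp (-(c2 * l)) * (c2 * l) ^ m * c2 / K
      = (B - A) * l ^ m / K := by
    rw [sub_mul, ← e1, ← e2]; ring
  rw [erw]
  have step1 : (B - A) * l ^ m / K = 0 ↔ A = B := by
    rw [div_eq_zero_iff, mul_eq_zero, sub_eq_zero]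
    simp [hK.ne', pow_eq_zero_iff, hl.ne', eq_comm]
  rw [step1]
  -- rewrite A and B as single exponentials
  have hA' : A = Real.exp (-(c1 * l) + Real.log c1 * N) := by
    rw [hAdef, Real.exp_add, ← Real.rpow_natCast c1 N, Real.rpow_def_of_pos hc1]
  have hB' : B = Real.exp (-(c2 * l) + Real.log c2 * N) := by
    rw [hBdef, Real.exp_add, ← Real.rpow_natCast c2 N, Real.rpow_def_of_pos hc2]
  rw [hA', hB', Real.exp_eq_exp]
  have hlog1 : Real.log c1 = Real.log N - Real.log σ2 :=
    Real.log_div hNpos.ne' hσ.ne'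
  have hlog2 : Real.log c2 = Real.log N - Real.log (a + σ2) :=
    Real.log_div hNpos.ne' hs.ne'
  have hlogt : Real.log ((a + σ2) / σ2) = Real.log (a + σ2) - Real.log σ2 :=
    Real.log_div hs.ne' hσ.ne'
  rw [hlog1, hlog2, hlogt, hc1def, hc2def]
  set L1 := Real.log σ2
  set L2 := Real.log (a + σ2)
  constructor
  · intro h
    field_simp at h
    rw [div_mul_eq_mul_div, eq_div_iff ha.ne']
    have h' : (N : ℝ) * (l * a) = (N : ℝ) * (σ2 * (a + σ2) * (L2 - L1)) := by
      linear_combination -(N : ℝ) * h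
    exact mul_left_cancel₀ hNpos.ne' h'
  · intro h
    subst h
    field_simp
    ring
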